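/- Let K be a field and H : Kⁿ → Kᵐ a polynomial map of degree at most d such that d! ≠ 0 in K. If the Jacobian matrix JH is antisymmetric (in particular m = n and (JH)ᵀ = −JH), then deg H ≤ 1. -/

import Mathlib

open MvPolynomial Finsupp

lemma coeff_pderiv_aux {σ : Type*} {R : Type*} [CommSemiring R] (i : σ) (β : σ →₀ ℕ)
    (p : MvPolynomial σ R) :
    coeff β (pderiv i p) = ((β i + 1 : ℕ) : R) * coeff (β + Finsupp.single i 1) p := by
  classical
  induction p using MvPolynomial.induction_on' with
  | add p q hp hq => simp [map_add, hp, hq, mul_add]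
  | monomial s a =>
    rw [pderiv_monomial, coeff_monomial, coeff_monomial]
    split_ifs with h1 h2 h2
    · subst h2
      have hs : ((β + Finsupp.single i 1 : σ →₀ ℕ)) i = β i + 1 := by
        simp
      rw [hs]
      push_cast
      ring
    · -- s - single i 1 = β but s ≠ β + single i 1
      rcases Nat.eq_zero_or_pos (s i) with h0 | h0
      · simp [h0]
      · exfalso
        apply h2
        have : Finsupp.single i 1 ≤ s := Finsupp.single_le_iff.mpr h0
        rw [← h1, tsub_add_cancel_of_le this]
    · exfalso
      apply h1
      subst h2
      ext x
      simp only [Finsupp.tsub_apply, Finsupp.add_apply, Finsupp.single_apply]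
      split_ifs <;> omega
    · simp

lemma pderiv_comm_aux {σ : Type*} {R : Type*} [CommSemiring R] (i j : σ)
    (p : MvPolynomial σ R) :
    pderiv i (pderiv j p) = pderiv j (pderiv i p) := by
  classical
  ext β
  rw [coeff_pderiv_aux, coeff_pderiv_aux, coeff_pderiv_aux, coeff_pderiv_aux]
  have hnat : (β i + 1) * ((β + Finsupp.single i 1 : σ →₀ ℕ) j + 1)
      = (β j + 1) * ((β + Finsupp.single j 1 : σ →₀ ℕ) i + 1) := by
    rcases eq_or_ne i j with h | h
    · subst h; ring
    · simp only [Finsupp.add_apply, Finsupp.single_apply, if_neg h, if_neg (Ne.symm h)]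
      ring
  rw [← mul_assoc, ← Nat.cast_mul, hnat, Nat.cast_mul, mul_assoc, add_right_comm]

lemma le_sum_aux {σ : Type*} (α : σ →₀ ℕ) (j : σ) : α j ≤ α.sum fun _ e => e := by
  classical
  by_cases h : j ∈ α.support
  · exact Finset.single_le_sum (fun _ _ => Nat.zero_le _) h
  · simp [Finsupp.notMem_support_iff.mp h]

/-- If `H` is a polynomial map of degree at most `d` over `K` with `d! ≠ 0` in `K` and
the Jacobian matrix of `H` is antisymmetric, then `deg H ≤ 1`. -/
theorem stmt7 (K : Type*) [Field K] (n d : ℕ) (H : Fin n → MvPolynomial (Fin n) K)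
    (hdeg : ∀ i, (H i).totalDegree ≤ d) (hfac : (d.factorial : K) ≠ 0)
    (hanti : ∀ i j, pderiv j (H i) = - pderiv i (H j)) :
    ∀ i, (H i).totalDegree ≤ 1 := by
  classical
  -- any natural between 1 and d is nonzero in K
  have hcast : ∀ m : ℕ, 1 ≤ m → m ≤ d → (m : K) ≠ 0 := by
    intro m h1 h2 h
    obtain ⟨c, hc⟩ := Nat.dvd_factorial h1 h2
    exact hfac (by rw [hc]; push_cast; rw [h, zero_mul])
  rcases le_or_gt d 1 with hd | hd
  · exact fun i => (hdeg i).trans hd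
  -- now 2 ≤ d, so (2 : K) ≠ 0
  have h2K : (2 : K) ≠ 0 := by
    have := hcast 2 (by norm_num) hd
    simpa using this
  -- all second partial derivatives vanish
  have hsec : ∀ i j k, pderiv k (pderiv j (H i)) = 0 := by
    intro i j k
    have anti : ∀ a b c : Fin n, pderiv a (pderiv b (H c)) = - pderiv a (pderiv c (H b)) := by
      intro a b c
      rw [hanti c b, map_neg]
    have key : pderiv k (pderiv j (H i)) = - pderiv k (pderiv j (H i)) := by
      calc pderiv k (pderiv j (H i)) = - pderiv k (pderiv i (H j)) := anti k j i
        _ = - pderiv i (pderiv k (H j)) := by rw [pderiv_comm_aux]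
        _ = pderiv i (pderiv j (H k)) := by rw [anti i k j, neg_neg]
        _ = pderiv j (pderiv i (H k)) := by rw [pderiv_comm_aux]
        _ = - pderiv j (pderiv k (H i)) := anti j i k
        _ = - pderiv k (pderiv j (H i)) := by rw [pderiv_comm_aux]
    have h2 : (2 : K) • pderiv k (pderiv j (H i)) = 0 := by
      rw [two_smul]
      nth_rewrite 1 [key]
      rw [neg_add_cancel]
    rcases smul_eq_zero.mp h2 with h | h
    · exact absurd h h2K
    · exact h
  -- conclude degree ≤ 1
  intro i
  by_contra hcon
  push_neg at hcon
  -- get a monomial of degree ≥ 2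
  have hne : (H i) ≠ 0 := by
    intro h
    rw [h] at hcon
    simp at hcon
  obtain ⟨α, hα, hαdeg⟩ := Finset.exists_mem_eq_sup (H i).support
    (MvPolynomial.support_nonempty.mpr hne) fun s => s.sum fun _ e => e
  have ht : (H i).totalDegree = α.sum fun _ e => e := hαdeg
  have hαd2 : 2 ≤ α.sum fun _ e => e := by omega
  have hαd : (α.sum fun _ e => e) ≤ d := by
    have := hdeg i
    omega
  -- find j with α j ≥ 1
  have hj : ∃ j, 1 ≤ α j := by
    by_contra h
    push_neg at h
    have : (α.sum fun _ e => e) = 0 := Finset.sum_eq_zero fun x _ => by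
      have := h x; show α x = 0; omega
    omega
  obtain ⟨j, hj⟩ := hj
  set β : Fin n →₀ ℕ := α - Finsupp.single j 1 with hβ
  have hαβ : α = β + Finsupp.single j 1 := by
    rw [hβ, tsub_add_cancel_of_le (Finsupp.single_le_iff.mpr hj)]
  have hsum : (α.sum fun _ e => e) = (β.sum fun _ e => e) + 1 := by
    rw [hαβ, Finsupp.sum_add_index' (fun _ => rfl) (fun _ _ _ => rfl),
      Finsupp.sum_single_index rfl]
  have hk : ∃ k, 1 ≤ β k := by
    by_contra h
    push_neg at h
    have : (β.sum fun _ e => e) = 0 := Finset.sum_eq_zero fun x _ => by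
      have := h x; show β x = 0; omega
    omega
  obtain ⟨k, hk⟩ := hk
  set γ : Fin n →₀ ℕ := β - Finsupp.single k 1 with hγ
  have hβγ : β = γ + Finsupp.single k 1 := by
    rw [hγ, tsub_add_cancel_of_le (Finsupp.single_le_iff.mpr hk)]
  -- the coefficient computation
  have h0 : coeff γ (pderiv k (pderiv j (H i))) = 0 := by rw [hsec]; simp
  rw [coeff_pderiv_aux, coeff_pderiv_aux, ← hβγ, ← hαβ] at h0
  have hγk : γ k + 1 = β k := by
    rw [hβγ]; simp [Finsupp.add_apply, Finsupp.single_apply]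
  rw [hγk] at h0
  have hβkd : β k ≤ d := by
    have := le_sum_aux β k
    omega
  have hβjd : β j + 1 ≤ d := by
    have := le_sum_aux β j
    omega
  have hc1 : ((β k : ℕ) : K) ≠ 0 := hcast _ hk hβkd
  have hc2 : ((β j + 1 : ℕ) : K) ≠ 0 := hcast _ (by omega) hβjd
  have hc3 : coeff α (H i) ≠ 0 := MvPolynomial.mem_support_iff.mp hα
  exact (mul_ne_zero hc1 (mul_ne_zero hc2 hc3)) h0
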